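/- Let A be a real m×s matrix with A·M ≠ 0, let M be a real s×N matrix, and let G be a real N×s matrix with M·G = I_s. Suppose σ > 0 and κ ≥ 1 satisfy ‖G u‖ ≤ (1/σ)·‖u‖ for every u ∈ ℝ^s and ‖M x‖ ≤ κσ·‖x‖ for every x ∈ ℝ^N. Let E be a real m×N matrix, set T̂ := A·M − E, and let T'' be a real m×N matrix with ‖T'' − T̂‖_F ≤ √2·‖E‖_F. Then ‖A − T''·G‖_F² / ‖A‖_F² ≤ (1 + √2)²·κ²·‖E‖_F² / ‖A·M‖_F². -/

import Mathlib

open Matrix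

/-- The Euclidean norm of a real vector. -/
noncomputable def euclNorm {n : Type*} [Fintype n] (v : n → ℝ) : ℝ :=
  Real.sqrt (∑ i, v i ^ 2)

/-- The Frobenius norm of a real matrix. -/
noncomputable def frobNorm {m n : Type*} [Fintype m] [Fintype n] (M : Matrix m n ℝ) : ℝ :=
  Real.sqrt (∑ i, ∑ j, M i j ^ 2)

lemma euclNorm_nonneg {n : Type*} [Fintype n] (v : n → ℝ) : 0 ≤ euclNorm v :=
  Real.sqrt_nonneg _

lemma euclNorm_sq {n : Type*} [Fintype n] (v : n → ℝ) : euclNorm v ^ 2 = ∑ i, v i ^ 2 := by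
  rw [euclNorm, Real.sq_sqrt]; positivity

lemma dot_le {n : Type*} [Fintype n] (x y : n → ℝ) :
    x ⬝ᵥ y ≤ euclNorm x * euclNorm y := by
  have h2 : (∑ i, x i * y i) ^ 2 ≤ (∑ i, x i ^ 2) * (∑ i, y i ^ 2) :=
    Finset.sum_mul_sq_le_sq_mul_sq Finset.univ x y
  have hx : (0:ℝ) ≤ ∑ i, x i ^ 2 := by positivity
  calc x ⬝ᵥ y ≤ |∑ i, x i * y i| := le_abs_self _
    _ = Real.sqrt ((∑ i, x i * y i) ^ 2) := (Real.sqrt_sq_eq_abs _).symm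
    _ ≤ Real.sqrt ((∑ i, x i ^ 2) * (∑ i, y i ^ 2)) := Real.sqrt_le_sqrt h2
    _ = euclNorm x * euclNorm y := by rw [Real.sqrt_mul hx, euclNorm, euclNorm]

lemma transpose_bound {p q : Type*} [Fintype p] [Fintype q] (B : Matrix p q ℝ) (c : ℝ)
    (hc : 0 ≤ c) (h : ∀ u, euclNorm (B.mulVec u) ≤ c * euclNorm u) (x : p → ℝ) :
    euclNorm (Bᵀ.mulVec x) ≤ c * euclNorm x := by
  set y := Bᵀ.mulVec x with hy
  have h1 : euclNorm y ^ 2 = x ⬝ᵥ B.mulVec y := by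
    rw [Matrix.dotProduct_mulVec, euclNorm_sq]
    rw [hy, Matrix.mulVec_transpose]
    simp [dotProduct, sq]
  have key : euclNorm y ^ 2 ≤ euclNorm x * (c * euclNorm y) := by
    calc euclNorm y ^ 2 = x ⬝ᵥ B.mulVec y := h1
      _ ≤ euclNorm x * euclNorm (B.mulVec y) := dot_le _ _
      _ ≤ euclNorm x * (c * euclNorm y) :=
        mul_le_mul_of_nonneg_left (h y) (euclNorm_nonneg x)
  rcases eq_or_lt_of_le (euclNorm_nonneg y) with hy0 | hy0
  · rw [← hy0]; exact mul_nonneg hc (euclNorm_nonneg x)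
  · nlinarith [key, hy0]

lemma frobNorm_nonneg {m n : Type*} [Fintype m] [Fintype n] (X : Matrix m n ℝ) :
    0 ≤ frobNorm X := Real.sqrt_nonneg _

lemma frobNorm_sq {m n : Type*} [Fintype m] [Fintype n] (X : Matrix m n ℝ) :
    frobNorm X ^ 2 = ∑ i, euclNorm (X i) ^ 2 := by
  rw [frobNorm, Real.sq_sqrt (by positivity)]
  exact Finset.sum_congr rfl fun i _ => (euclNorm_sq (X i)).symm

lemma frob_mul_le {m p q : Type*} [Fintype m] [Fintype p] [Fintype q]
    (X : Matrix m p ℝ) (B : Matrix p q ℝ) (c : ℝ) (hc : 0 ≤ c)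
    (h : ∀ u, euclNorm (Bᵀ.mulVec u) ≤ c * euclNorm u) :
    frobNorm (X * B) ≤ c * frobNorm X := by
  have hrow : ∀ i, (X * B) i = Bᵀ.mulVec (X i) := by
    intro i; funext j
    simp [Matrix.mul_apply, Matrix.mulVec, dotProduct, mul_comm]
  have hsq : frobNorm (X * B) ^ 2 ≤ (c * frobNorm X) ^ 2 := by
    rw [frobNorm_sq, mul_pow, frobNorm_sq, Finset.mul_sum]
    apply Finset.sum_le_sum
    intro i _
    rw [hrow i, ← mul_pow]
    exact pow_le_pow_left₀ (euclNorm_nonneg _) (h (X i)) 2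
  nlinarith [frobNorm_nonneg (X * B), mul_nonneg hc (frobNorm_nonneg X), hsq]

noncomputable def matE {m n : Type*} [Fintype m] [Fintype n] (X : Matrix m n ℝ) :
    EuclideanSpace ℝ (m × n) :=
  (WithLp.equiv 2 _).symm (fun p => X p.1 p.2)

lemma frobNorm_eq_norm {m n : Type*} [Fintype m] [Fintype n] (X : Matrix m n ℝ) :
    frobNorm X = ‖matE X‖ := by
  rw [EuclideanSpace.norm_eq]
  simp [frobNorm, matE, Fintype.sum_prod_type, Real.norm_eq_abs, sq_abs]

lemma matE_add {m n : Type*} [Fintype m] [Fintype n] (X Y : Matrix m n ℝ) :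
    matE (X + Y) = matE X + matE Y := by
  ext p
  simp [matE]

lemma frobNorm_triangle {m n : Type*} [Fintype m] [Fintype n] (X Y : Matrix m n ℝ) :
    frobNorm (X + Y) ≤ frobNorm X + frobNorm Y := by
  rw [frobNorm_eq_norm, frobNorm_eq_norm, frobNorm_eq_norm, matE_add]
  exact norm_add_le _ _

lemma frobNorm_neg {m n : Type*} [Fintype m] [Fintype n] (X : Matrix m n ℝ) :
    frobNorm (-X) = frobNorm X := by
  simp [frobNorm, Matrix.neg_apply]

lemma frobNorm_pos {m n : Type*} [Fintype m] [Fintype n] {X : Matrix m n ℝ} (hX : X ≠ 0) :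
    0 < frobNorm X := by
  rcases eq_or_lt_of_le (frobNorm_nonneg X) with h0 | h0
  · exfalso; apply hX
    rw [frobNorm_eq_norm] at h0
    have hz := norm_eq_zero.mp h0.symm
    ext i j
    have := congrArg (fun v => v (i, j)) hz
    simpa [matE, WithLp.equiv] using this
  · exact h0

/-- relative-error form of the paper's Proposition A.6: with `G` a right
inverse of the well-conditioned matrix `M` (`‖G u‖ ≤ ‖u‖/σ`, `‖M x‖ ≤ κσ ‖x‖`),
`T̂ = A M − E`, `A M ≠ 0`, and `‖T'' − T̂‖_F ≤ √2 ‖E‖_F`, the relative squared recovery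
error satisfies `‖A − T'' G‖_F²/‖A‖_F² ≤ (1 + √2)² κ² ‖E‖_F²/‖A M‖_F²`. -/
theorem recovery_estimate_relative (m s N : ℕ)
    (A : Matrix (Fin m) (Fin s) ℝ) (M : Matrix (Fin s) (Fin N) ℝ)
    (hAM : A * M ≠ 0)
    (G : Matrix (Fin N) (Fin s) ℝ) (hMG : M * G = 1)
    (σ κ : ℝ) (hσ : 0 < σ) (hκ : 1 ≤ κ)
    (hG : ∀ u : Fin s → ℝ, euclNorm (G.mulVec u) ≤ (1 / σ) * euclNorm u)
    (hM : ∀ x : Fin N → ℝ, euclNorm (M.mulVec x) ≤ κ * σ * euclNorm x)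
    (E : Matrix (Fin m) (Fin N) ℝ)
    (T'' : Matrix (Fin m) (Fin N) ℝ)
    (hT : frobNorm (T'' - (A * M - E)) ≤ Real.sqrt 2 * frobNorm E) :
    frobNorm (A - T'' * G) ^ 2 / frobNorm A ^ 2 ≤
      (1 + Real.sqrt 2) ^ 2 * κ ^ 2 * frobNorm E ^ 2 / frobNorm (A * M) ^ 2 := by
  set a := frobNorm (A - T'' * G) with ha
  set b := frobNorm A with hb
  set e := frobNorm E with he
  set t := frobNorm (A * M) with htt
  have hκσ : 0 < κ * σ := mul_pos (lt_of_lt_of_le one_pos hκ) hσ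
  -- factorization
  have hfact : A - T'' * G = (A * M - T'') * G := by
    rw [Matrix.sub_mul, Matrix.mul_assoc, hMG, Matrix.mul_one]
  -- bound on ‖AM - T''‖
  have hsplit : A * M - T'' = E + -(T'' - (A * M - E)) := by abel
  have h2 : frobNorm (A * M - T'') ≤ (1 + Real.sqrt 2) * e := by
    rw [hsplit]
    calc frobNorm (E + -(T'' - (A * M - E)))
        ≤ frobNorm E + frobNorm (-(T'' - (A * M - E))) := frobNorm_triangle _ _
      _ = e + frobNorm (T'' - (A * M - E)) := by rw [frobNorm_neg]
      _ ≤ e + Real.sqrt 2 * e := by linarith [hT]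
      _ = (1 + Real.sqrt 2) * e := by ring
  -- bound on a
  have hGT := transpose_bound G (1 / σ) (by positivity) hG
  have h1 : a ≤ (1 / σ) * frobNorm (A * M - T'') := by
    rw [ha, hfact]
    exact frob_mul_le _ G (1 / σ) (by positivity) hGT
  have he0 : 0 ≤ e := frobNorm_nonneg E
  have hs2 : (0:ℝ) ≤ 1 + Real.sqrt 2 := by positivity
  have ha_le : a ≤ (1 / σ) * ((1 + Real.sqrt 2) * e) := by
    calc a ≤ (1 / σ) * frobNorm (A * M - T'') := h1
      _ ≤ (1 / σ) * ((1 + Real.sqrt 2) * e) := by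
          apply mul_le_mul_of_nonneg_left h2 (by positivity)
  -- bound on t
  have hMT := transpose_bound M (κ * σ) hκσ.le hM
  have ht_le : t ≤ κ * σ * b := frob_mul_le A M (κ * σ) hκσ.le hMT
  have ht_pos : 0 < t := frobNorm_pos hAM
  have hb_pos : 0 < b := by nlinarith
  have ha0 : 0 ≤ a := frobNorm_nonneg _
  have ht0 : 0 ≤ t := ht_pos.le
  -- final combination
  rw [div_le_div_iff₀ (by positivity) (by positivity)]
  have ha2 : a ^ 2 ≤ ((1 / σ) * ((1 + Real.sqrt 2) * e)) ^ 2 :=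
    pow_le_pow_left₀ ha0 ha_le 2
  have ht2 : t ^ 2 ≤ (κ * σ * b) ^ 2 := pow_le_pow_left₀ ht0 ht_le 2
  calc a ^ 2 * t ^ 2 ≤ ((1 / σ) * ((1 + Real.sqrt 2) * e)) ^ 2 * (κ * σ * b) ^ 2 := by
        apply mul_le_mul ha2 ht2 (by positivity) (by positivity)
    _ = (1 + Real.sqrt 2) ^ 2 * κ ^ 2 * e ^ 2 * b ^ 2 := by
        field_simp
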